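/- Let G be a connected simple graph on a finite vertex set V with |V| = n ≥ 2, let s ∈ V, and let p = (ln n)/√n (which lies in (0,1) for n ≥ 2). Let (ξ_v)_{v∈V} be independent Bernoulli(p) random variables, i.e. consider the product of Bernoulli(p) measures on {0,1}^V, and let U = {s} ∪ {v ∈ V : ξ_v = 1}. Let C ≥ 3 be a real number and let m = ⌈C√n⌉. Then with probability at least 1 − n^{2−C}, the following event holds: for every vertex t ∈ V there exists a path from s to t in G of length dist_G(s,t) (i.e. a shortest s–t path) such that among any m consecutive vertices of this path at least one belongs to U. -/

import Mathlib

open MeasureTheory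

lemma my_log_le_sqrt {x : ℝ} (hx : 1 ≤ x) : Real.log x ≤ Real.sqrt x := by
  have hx0 : (0:ℝ) < x := by linarith
  set z := Real.sqrt (Real.sqrt x) with hz
  have hz0 : 0 < z := Real.sqrt_pos.mpr (Real.sqrt_pos.mpr hx0)
  have hz2 : z ^ 2 = Real.sqrt x := Real.sq_sqrt (Real.sqrt_nonneg x)
  have hz4 : (z ^ 2) ^ 2 = x := by rw [hz2]; exact Real.sq_sqrt hx0.le
  have hlog : Real.log z ≤ z - 1 := Real.log_le_sub_one_of_pos hz0
  have hlx : Real.log x = 4 * Real.log z := by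
    rw [← hz4, Real.log_pow, Real.log_pow]; push_cast; ring
  nlinarith [sq_nonneg (z - 2)]

lemma my_getVert_injOn {V : Type*} {G : SimpleGraph V} {u v : V} (p : G.Walk u v)
    (hp : p.IsPath) : ∀ i ≤ p.length, ∀ j ≤ p.length, p.getVert i = p.getVert j → i = j := by
  induction p with
  | nil => intro i hi j hj _; simp only [SimpleGraph.Walk.length_nil, Nat.le_zero] at hi hj; omega
  | cons h q ih =>
    rw [SimpleGraph.Walk.cons_isPath_iff] at hp
    intro i hi j hj heq
    match i, j with
    | 0, 0 => rfl
    | 0, j+1 =>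
      exfalso; apply hp.2
      rw [SimpleGraph.Walk.mem_support_iff_exists_getVert]
      refine ⟨j, ?_, ?_⟩
      · rw [← SimpleGraph.Walk.getVert_cons_succ q h, ← heq, SimpleGraph.Walk.getVert_zero]
      · simp only [SimpleGraph.Walk.length_cons] at hj; omega
    | i+1, 0 =>
      exfalso; apply hp.2
      rw [SimpleGraph.Walk.mem_support_iff_exists_getVert]
      refine ⟨i, ?_, ?_⟩
      · rw [← SimpleGraph.Walk.getVert_cons_succ q h, heq, SimpleGraph.Walk.getVert_zero]
      · simp only [SimpleGraph.Walk.length_cons] at hi; omega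
    | i+1, j+1 =>
      simp only [SimpleGraph.Walk.length_cons] at hi hj
      have := ih hp.1 i (by omega) j (by omega)
        (by rwa [SimpleGraph.Walk.getVert_cons_succ, SimpleGraph.Walk.getVert_cons_succ] at heq)
      omega

/-- Hitting-set lemma for shortest paths: let `G` be a connected graph on `n ≥ 2`
vertices, `s` a source, and include each vertex independently with probability
`p = (ln n)/√n` (Bernoulli product measure on `{0,1}^V`); let
`U = {s} ∪ {v : ξ v = 1}`.  For `C ≥ 3` and `m = ⌈C√n⌉`, with probability at least
`1 − n^{2−C}`, every vertex `t` admits a shortest `s`–`t` path in which any `m`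
consecutive vertices contain a vertex of `U`. -/
theorem hitting_set_shortest_paths {V : Type*} [Fintype V] (G : SimpleGraph V)
    (hG : G.Connected) (hn : 2 ≤ Fintype.card V) (s : V) (C : ℝ) (hC : 3 ≤ C) :
    ENNReal.ofReal (1 - (Fintype.card V : ℝ) ^ ((2 : ℝ) - C)) ≤
      Measure.pi
        (fun _ : V =>
          (ENNReal.ofReal (Real.log (Fintype.card V) / Real.sqrt (Fintype.card V)) •
              Measure.dirac true +
            (1 - ENNReal.ofReal
                (Real.log (Fintype.card V) / Real.sqrt (Fintype.card V))) •
              Measure.dirac false))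
        {ξ : V → Bool | ∀ t : V, ∃ w : G.Walk s t, w.IsPath ∧ w.length = G.dist s t ∧
          ∀ i : ℕ, i + ⌈C * Real.sqrt (Fintype.card V)⌉₊ ≤ w.length + 1 →
            ∃ j : ℕ, i ≤ j ∧ j < i + ⌈C * Real.sqrt (Fintype.card V)⌉₊ ∧
              (w.getVert j = s ∨ ξ (w.getVert j) = true)} := by
  classical
  set n := Fintype.card V with hn_def
  have hn1 : (1:ℝ) ≤ (n:ℝ) := by exact_mod_cast Nat.one_le_of_lt hn
  have hn0 : (0:ℝ) < (n:ℝ) := by linarith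
  have hsn : 0 < Real.sqrt n := Real.sqrt_pos.mpr hn0
  set p : ℝ := Real.log n / Real.sqrt n with hp_def
  have hp0 : 0 ≤ p := div_nonneg (Real.log_nonneg hn1) hsn.le
  have hp1 : p ≤ 1 := (div_le_one hsn).mpr (my_log_le_sqrt hn1)
  set pe : ENNReal := ENNReal.ofReal p with hpe_def
  have hpe1 : pe ≤ 1 := by
    rw [hpe_def, ← ENNReal.ofReal_one]; exact ENNReal.ofReal_le_ofReal hp1
  set μv : Measure Bool := pe • Measure.dirac true + (1 - pe) • Measure.dirac false with hμv_def
  haveI : IsProbabilityMeasure μv := by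
    constructor
    rw [hμv_def]
    simp only [Measure.add_apply, Measure.smul_apply, smul_eq_mul, measure_univ, mul_one]
    exact add_tsub_cancel_of_le hpe1
  have hfalse : μv {false} = 1 - pe := by
    rw [hμv_def]
    simp [Measure.dirac_apply]
  set μpi := Measure.pi (fun _ : V => μv) with hμpi_def
  set m := ⌈C * Real.sqrt (n:ℝ)⌉₊ with hm_def
  have hm1 : 1 ≤ m := Nat.ceil_pos.mpr (by positivity)
  set E := {ξ : V → Bool | ∀ t : V, ∃ w : G.Walk s t, w.IsPath ∧ w.length = G.dist s t ∧
          ∀ i : ℕ, i + m ≤ w.length + 1 →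
            ∃ j : ℕ, i ≤ j ∧ j < i + m ∧
              (w.getVert j = s ∨ ξ (w.getVert j) = true)} with hE_def
  show ENNReal.ofReal (1 - (n : ℝ) ^ ((2:ℝ) - C)) ≤ μpi E
  choose w hw1 hw2 using fun t => hG.exists_path_of_dist s t
  set Bad : V → ℕ → Set (V → Bool) := fun t i =>
    {ξ | 1 ≤ i ∧ i + m ≤ (w t).length + 1 ∧
      ∀ j, i ≤ j → j < i + m → ξ ((w t).getVert j) = false} with hBad_def
  have hsub : Eᶜ ⊆ ⋃ t, ⋃ i ∈ Finset.range n, Bad t i := by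
    intro ξ hξ
    simp only [Set.mem_compl_iff, hE_def, Set.mem_setOf_eq, not_forall] at hξ
    obtain ⟨t, ht⟩ := hξ
    push_neg at ht
    obtain ⟨i, hile, hbad⟩ := ht (w t) (hw1 t) (hw2 t)
    have hlen : (w t).length < n := (hw1 t).length_lt
    have hi1 : 1 ≤ i := by
      by_contra hcon
      have h0 : i = 0 := by omega
      have := hbad 0 (by omega) (by omega)
      rw [SimpleGraph.Walk.getVert_zero] at this
      exact this.1 rfl
    refine Set.mem_iUnion.mpr ⟨t, Set.mem_iUnion₂.mpr ⟨i, Finset.mem_range.mpr (by omega), ?_⟩⟩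
    refine ⟨hi1, hile, fun j hj1 hj2 => ?_⟩
    have := (hbad j hj1 hj2).2
    simpa using this
  have hBadMeas : ∀ t i, μpi (Bad t i) ≤ (1 - pe) ^ m := by
    intro t i
    by_cases hcond : 1 ≤ i ∧ i + m ≤ (w t).length + 1
    · set T : Finset V := (Finset.Ico i (i + m)).image ((w t).getVert) with hT
      have hTcard : T.card = m := by
        rw [hT, Finset.card_image_of_injOn, Nat.card_Ico]
        · omega
        · intro a ha b hb hab
          rw [Finset.coe_Ico, Set.mem_Ico] at ha hb
          exact my_getVert_injOn (w t) (hw1 t) a (by omega) b (by omega) hab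
      have hsub2 : Bad t i ⊆
          Set.pi Set.univ (fun v => if v ∈ T then ({false} : Set Bool) else Set.univ) := by
        intro ξ hξ v _
        by_cases hv : v ∈ T
        · simp only [hv, if_true, Set.mem_singleton_iff]
          obtain ⟨j, hj, rfl⟩ := Finset.mem_image.mp hv
          rw [Finset.mem_Ico] at hj
          exact hξ.2.2 j hj.1 hj.2
        · simp [hv]
      calc μpi (Bad t i) ≤ μpi (Set.pi Set.univ
              (fun v => if v ∈ T then ({false} : Set Bool) else Set.univ)) :=
            measure_mono hsub2
        _ = ∏ v : V, μv (if v ∈ T then ({false} : Set Bool) else Set.univ) :=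
            Measure.pi_pi _ _
        _ = ∏ v : V, (if v ∈ T then (1 - pe) else 1) := by
            refine Finset.prod_congr rfl fun v _ => ?_
            by_cases hv : v ∈ T
            · rw [if_pos hv, if_pos hv, hfalse]
            · rw [if_neg hv, if_neg hv, measure_univ]
        _ = (1 - pe) ^ m := by
            rw [Finset.prod_ite_mem, Finset.univ_inter, Finset.prod_const, hTcard]
    · have hempty : Bad t i = ∅ := by
        ext ξ; simp only [hBad_def, Set.mem_setOf_eq, Set.mem_empty_iff_false, iff_false]
        tauto
      simp [hempty]
  have hpow : (1 - pe) ^ m ≤ ENNReal.ofReal ((n:ℝ) ^ (-C)) := by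
    have h1 : 1 - pe = ENNReal.ofReal (1 - p) := by
      rw [ENNReal.ofReal_sub _ hp0, ENNReal.ofReal_one]
    rw [h1, ← ENNReal.ofReal_pow (by linarith : (0:ℝ) ≤ 1 - p)]
    apply ENNReal.ofReal_le_ofReal
    have hmp : C * Real.log n ≤ (m:ℝ) * p := by
      have hceil : C * Real.sqrt n ≤ (m:ℝ) := Nat.le_ceil _
      have : (C * Real.sqrt n) * p ≤ (m:ℝ) * p := mul_le_mul_of_nonneg_right hceil hp0
      calc C * Real.log n = (C * Real.sqrt n) * p := by
            rw [hp_def]; field_simp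
        _ ≤ (m:ℝ) * p := this
    calc (1 - p) ^ m ≤ (Real.exp (-p)) ^ m := by
          apply pow_le_pow_left₀ (by linarith)
          nlinarith [Real.add_one_le_exp (-p)]
      _ = Real.exp (-((m:ℝ) * p)) := by
          rw [← Real.exp_nat_mul]; ring_nf
      _ ≤ Real.exp (-(C * Real.log n)) := Real.exp_le_exp.mpr (by linarith)
      _ = (n:ℝ) ^ (-C) := by
          rw [Real.rpow_def_of_pos hn0]; ring_nf
  have hEc : μpi Eᶜ ≤ ENNReal.ofReal ((n:ℝ) ^ ((2:ℝ) - C)) := by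
    calc μpi Eᶜ ≤ μpi (⋃ t, ⋃ i ∈ Finset.range n, Bad t i) := measure_mono hsub
      _ ≤ ∑' t, μpi (⋃ i ∈ Finset.range n, Bad t i) := measure_iUnion_le _
      _ ≤ ∑' t : V, ∑ i ∈ Finset.range n, μpi (Bad t i) :=
          ENNReal.tsum_le_tsum fun t => measure_biUnion_finset_le _ _
      _ ≤ ∑' t : V, ∑ _i ∈ Finset.range n, ENNReal.ofReal ((n:ℝ) ^ (-C)) := by
          exact ENNReal.tsum_le_tsum fun t =>
            Finset.sum_le_sum fun i _ => (hBadMeas t i).trans hpow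
      _ = (n : ENNReal) * ((n : ENNReal) * ENNReal.ofReal ((n:ℝ) ^ (-C))) := by
          rw [tsum_fintype]
          simp [Finset.sum_const, mul_assoc]
          rfl
      _ = ENNReal.ofReal ((n:ℝ) ^ ((2:ℝ) - C)) := by
          rw [← ENNReal.ofReal_natCast n, ← ENNReal.ofReal_mul (by positivity),
            ← ENNReal.ofReal_mul (by positivity)]
          congr 1
          rw [show (2:ℝ) - C = 2 + (-C) by ring, Real.rpow_add hn0,
            show ((2:ℝ):ℝ) = ((2:ℕ):ℝ) by norm_num, Real.rpow_natCast]
          ring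
  haveI : IsProbabilityMeasure μpi := by rw [hμpi_def]; infer_instance
  have h1 : (1:ENNReal) ≤ μpi E + μpi Eᶜ := by
    rw [← measure_univ (μ := μpi), ← Set.union_compl_self E]
    exact measure_union_le _ _
  have h2 : ENNReal.ofReal (1 - (n : ℝ) ^ ((2:ℝ) - C)) =
      1 - ENNReal.ofReal ((n:ℝ) ^ ((2:ℝ) - C)) := by
    rw [ENNReal.ofReal_sub _ (by positivity), ENNReal.ofReal_one]
  rw [h2]
  exact tsub_le_iff_right.mpr (h1.trans (add_le_add_right hEc _))
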